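/- The derivative of the RoBoS-NN loss is bounded uniformly in the residual by a constant that matches the Lipschitz constant used in the generalization bound: sup over u ∈ ℝ of |L′(u)| is at most λ·a/e, and moreover the bound λ·a/e is not attained at any real u (the supremum is strict at every point), since |u|/√(u² + ε) < 1 for every real u when ε > 0. -/

import Mathlib

noncomputable def robos (a lam eps : ℝ) (u : ℝ) : ℝ :=
  lam * (1 - (a * Real.sqrt (u ^ 2 + eps) - a * Real.sqrt eps + 1) *
    Real.exp (-(a * Real.sqrt (u ^ 2 + eps) - a * Real.sqrt eps)))

lemma robos_hasDerivAt (a lam eps : ℝ) (heps : 0 < eps) (u : ℝ) :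
    HasDerivAt (robos a lam eps)
      (lam * ((a * Real.sqrt (u ^ 2 + eps) - a * Real.sqrt eps) *
        Real.exp (-(a * Real.sqrt (u ^ 2 + eps) - a * Real.sqrt eps)) *
        (a * u / Real.sqrt (u ^ 2 + eps)))) u := by
  have hpos : (0:ℝ) < u ^ 2 + eps := by positivity
  have hs : 0 < Real.sqrt (u ^ 2 + eps) := Real.sqrt_pos.2 hpos
  have h1 : HasDerivAt (fun u : ℝ => u ^ 2 + eps) (2 * u) u := by
    simpa using (hasDerivAt_pow 2 u).add_const eps
  have h2 : HasDerivAt (fun u : ℝ => Real.sqrt (u ^ 2 + eps))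
      (u / Real.sqrt (u ^ 2 + eps)) u := by
    have := (Real.hasDerivAt_sqrt (ne_of_gt hpos)).comp u h1
    refine this.congr_deriv ?_
    field_simp
  have ht : HasDerivAt (fun u : ℝ => a * Real.sqrt (u ^ 2 + eps) - a * Real.sqrt eps)
      (a * u / Real.sqrt (u ^ 2 + eps)) u := by
    simpa [mul_div_assoc] using (h2.const_mul a).sub_const (a * Real.sqrt eps)
  have hexp : HasDerivAt (fun u : ℝ =>
      Real.exp (-(a * Real.sqrt (u ^ 2 + eps) - a * Real.sqrt eps)))
      (Real.exp (-(a * Real.sqrt (u ^ 2 + eps) - a * Real.sqrt eps)) *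
        (-(a * u / Real.sqrt (u ^ 2 + eps)))) u := ht.neg.exp
  have hprod := ((ht.add_const 1).mul hexp)
  have := ((hprod.const_sub 1).const_mul lam)
  refine this.congr_deriv ?_
  ring

theorem robos_deriv_bound_strict (a lam eps : ℝ) (ha : 0 < a) (hlam : 0 < lam) (heps : 0 < eps) :
    (∀ u : ℝ, |deriv (robos a lam eps) u| ≤ lam * a / Real.exp 1) ∧
    (∀ u : ℝ, |deriv (robos a lam eps) u| < lam * a / Real.exp 1) ∧
    (∀ u : ℝ, |u| / Real.sqrt (u ^ 2 + eps) < 1) := by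
  have husq : ∀ u : ℝ, |u| < Real.sqrt (u ^ 2 + eps) := by
    intro u
    have : Real.sqrt (u ^ 2) < Real.sqrt (u ^ 2 + eps) :=
      Real.sqrt_lt_sqrt (sq_nonneg u) (by linarith)
    simpa [Real.sqrt_sq_eq_abs] using this
  have hlt : ∀ u : ℝ, |deriv (robos a lam eps) u| < lam * a / Real.exp 1 := by
    intro u
    have hpos : (0:ℝ) < u ^ 2 + eps := by positivity
    have hs : 0 < Real.sqrt (u ^ 2 + eps) := Real.sqrt_pos.2 hpos
    set s := Real.sqrt (u ^ 2 + eps) with hsdef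
    set t := a * s - a * Real.sqrt eps with htdef
    have ht0 : 0 ≤ t := by
      have : Real.sqrt eps ≤ s := Real.sqrt_le_sqrt (by nlinarith)
      nlinarith
    have hderiv : deriv (robos a lam eps) u = lam * (t * Real.exp (-t) * (a * u / s)) :=
      (robos_hasDerivAt a lam eps heps u).deriv
    have hte : t * Real.exp (-t) ≤ Real.exp (-1) := by
      have h1 : t ≤ Real.exp (t - 1) := by
        have := Real.add_one_le_exp (t - 1); linarith
      calc t * Real.exp (-t) ≤ Real.exp (t - 1) * Real.exp (-t) :=
            mul_le_mul_of_nonneg_right h1 (Real.exp_pos _).le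
        _ = Real.exp (-1) := by rw [← Real.exp_add]; ring_nf
    have habs : |deriv (robos a lam eps) u| = lam * (t * Real.exp (-t)) * (a * |u| / s) := by
      rw [hderiv, abs_mul, abs_mul, abs_div, abs_mul,
        abs_of_pos hlam, abs_of_nonneg ht0, abs_of_pos (Real.exp_pos _), abs_mul,
        abs_of_pos ha, abs_of_pos hs]
      ring
    rw [habs]
    rcases eq_or_ne u 0 with rfl | hu
    · simp
      positivity
    · have hup : 0 < |u| := abs_pos.2 hu
      calc lam * (t * Real.exp (-t)) * (a * |u| / s)
          ≤ lam * Real.exp (-1) * (a * |u| / s) := by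
            apply mul_le_mul_of_nonneg_right (mul_le_mul_of_nonneg_left hte hlam.le)
            positivity
        _ < lam * Real.exp (-1) * a := by
            apply mul_lt_mul_of_pos_left _ (by positivity)
            rw [div_lt_iff₀ hs]
            have := husq u
            nlinarith
        _ = lam * a / Real.exp 1 := by
            rw [Real.exp_neg]
            field_simp
  exact ⟨fun u => (hlt u).le, hlt, fun u => (div_lt_one (Real.sqrt_pos.2 (by positivity))).2 (husq u)⟩
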